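/- arXiv:1808.10590 — 6 statements merged into one kernel-verified Lean document; each statement's English description precedes it below -/
import Mathlib

section
/- Let I be a finite index set, T^i finite sets, R a finite set, D > 0, and let λ^i ≥ 0 with ∑_i λ^i = 1. A vector f = (f_r(t)) satisfies: the separability condition f_r(t^i,t^{-i}) − f_r(t̃^i,t^{-i}) = f_r(t^i,t̃^{-i}) − f_r(t̃^i,t̃^{-i}) for all r, i, types; ∑_r f_r(t) = D for all t; f_r(t) ≥ 0; and D − ∑_r min_{t^i} f_r(t^i, t^{-i}) ≤ λ^i D for all t^{-i} and all i — if and only if there exist functions q^i : T^i → ℝ^R with q_r^i(t^i) ≥ 0, ∑_r q_r^i(t^i) = λ^i D for all t^i, and f_r(t) = ∑_{i∈I} q_r^i(t^i) for all r, t. -/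
private lemma sep_decomp
    {I : Type*} [Fintype I] [DecidableEq I]
    {T : I → Type*} {R : Type*}
    (f : R → (∀ i, T i) → ℝ)
    (hsep : ∀ (r : R) (i : I) (a b : T i) (t t' : ∀ j, T j),
        f r (Function.update t i a) - f r (Function.update t i b) =
          f r (Function.update t' i a) - f r (Function.update t' i b))
    (t0 t : ∀ i, T i) (r : R) :
    f r t = f r t0 + ∑ i : I, (f r (Function.update t0 i (t i)) - f r t0) := by
  classical
  have H : ∀ s : Finset I,
      f r (fun j => if j ∈ s then t j else t0 j)
        = f r t0 + ∑ i ∈ s, (f r (Function.update t0 i (t i)) - f r t0) := by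
    intro s
    induction s using Finset.induction_on with
    | empty => simp
    | @insert i s hi ih =>
      have hu' : (fun j => if j ∈ insert i s then t j else t0 j)
          = Function.update (fun j => if j ∈ s then t j else t0 j) i (t i) := by
        funext j
        rcases eq_or_ne j i with rfl | hj
        · simp
        · simp [Function.update_of_ne hj, hj]
      have hu : (fun j => if j ∈ s then t j else t0 j)
          = Function.update (fun j => if j ∈ s then t j else t0 j) i (t0 i) := by
        funext j
        rcases eq_or_ne j i with rfl | hj
        · simp [hi]
        · simp [Function.update_of_ne hj]
      have hstep := hsep r i (t i) (t0 i) (fun j => if j ∈ s then t j else t0 j) t0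
      rw [← hu, Function.update_eq_self] at hstep
      rw [hu', Finset.sum_insert hi]
      linarith [ih]
  have := H Finset.univ
  simpa using this

private lemma forward_construction
    {I : Type*} [Fintype I] [DecidableEq I]
    {T : I → Type*}
    {R : Type*} [Fintype R]
    (D : ℝ) (lam : I → ℝ)
    (f : R → (∀ i, T i) → ℝ) (t0 : ∀ i, T i)
    (M : I → R → ℝ)
    (hM_le : ∀ (i : I) (r : R) (a : T i), M i r ≤ f r (Function.update t0 i a))
    (hdec : ∀ (r : R) (t : ∀ i, T i),
        f r t = f r t0 + ∑ i : I, (f r (Function.update t0 i (t i)) - f r t0))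
    (hdem : ∀ t : ∀ i, T i, ∑ r : R, f r t = D)
    (hcol : ∀ r : R, ∑ i : I, (f r t0 - M i r) ≤ f r t0)
    (hrow : ∀ i : I, D - ∑ r : R, M i r ≤ lam i * D)
    (hlam1 : ∑ i : I, lam i = 1) :
    ∃ q : ∀ i : I, T i → R → ℝ,
      (∀ (i : I) (ti : T i) (r : R), 0 ≤ q i ti r) ∧
      (∀ (i : I) (ti : T i), ∑ r : R, q i ti r = lam i * D) ∧
      (∀ (r : R) (t : ∀ i, T i), f r t = ∑ i : I, q i (t i) r) := by
  classical
  set c : R → ℝ := fun r => f r t0 - ∑ i : I, (f r t0 - M i r) with hcdef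
  set s : I → ℝ := fun i => lam i * D - ∑ r : R, (f r t0 - M i r) with hsdef
  set S : ℝ := ∑ i : I, s i with hSdef
  have hc0 : ∀ r, 0 ≤ c r := fun r => sub_nonneg.mpr (hcol r)
  have hs0 : ∀ i, 0 ≤ s i := by
    intro i
    have h1 : ∑ r : R, (f r t0 - M i r) = D - ∑ r : R, M i r := by
      rw [Finset.sum_sub_distrib, hdem t0]
    have h2 := hrow i
    show (0:ℝ) ≤ lam i * D - ∑ r : R, (f r t0 - M i r)
    linarith
  have hS0 : 0 ≤ S := Finset.sum_nonneg fun i _ => hs0 i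
  have hcS : ∑ r : R, c r = S := by
    show ∑ r : R, (f r t0 - ∑ i : I, (f r t0 - M i r))
        = ∑ i : I, (lam i * D - ∑ r : R, (f r t0 - M i r))
    rw [Finset.sum_sub_distrib, Finset.sum_sub_distrib, hdem t0, ← Finset.sum_mul,
      hlam1, one_mul]
    congr 1
    exact Finset.sum_comm
  refine ⟨fun i ti r => f r (Function.update t0 i ti) - M i r + s i * c r / S, ?_, ?_, ?_⟩
  · intro i ti r
    have h1 := hM_le i r ti
    have h2 : 0 ≤ s i * c r / S := div_nonneg (mul_nonneg (hs0 i) (hc0 r)) hS0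
    show (0:ℝ) ≤ f r (Function.update t0 i ti) - M i r + s i * c r / S
    linarith
  · intro i ti
    have hsum : ∑ r : R, (f r (Function.update t0 i ti) - M i r + s i * c r / S)
        = (D - ∑ r : R, M i r) + s i * S / S := by
      rw [Finset.sum_add_distrib, Finset.sum_sub_distrib, hdem, ← Finset.sum_div,
        ← Finset.mul_sum, hcS]
    have hM0 : ∑ r : R, (f r t0 - M i r) = D - ∑ r : R, M i r := by
      rw [Finset.sum_sub_distrib, hdem t0]
    have hsi' : s i = lam i * D - ∑ r : R, (f r t0 - M i r) := rfl
    show ∑ r : R, (f r (Function.update t0 i ti) - M i r + s i * c r / S) = lam i * D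
    rw [hsum]
    rcases eq_or_ne S 0 with hS | hS
    · rw [hSdef] at hS
      have hz := (Finset.sum_eq_zero_iff_of_nonneg fun j _ => hs0 j).mp hS
      have hsi : s i = 0 := hz i (Finset.mem_univ i)
      rw [hsi]
      simp only [zero_mul, zero_div, add_zero]
      rw [hsi] at hsi'
      linarith
    · rw [mul_div_assoc, div_self hS, mul_one]
      linarith
  · intro r t
    show f r t = ∑ i : I, (f r (Function.update t0 i (t i)) - M i r + s i * c r / S)
    have hterm : ∀ i : I, f r (Function.update t0 i (t i)) - M i r + s i * c r / S
        = (f r (Function.update t0 i (t i)) - f r t0) + (f r t0 - M i r)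
          + s i * (c r / S) := fun i => by ring
    have h1 : ∑ i : I, (f r (Function.update t0 i (t i)) - M i r + s i * c r / S)
        = (∑ i : I, (f r (Function.update t0 i (t i)) - f r t0))
          + (∑ i : I, (f r t0 - M i r)) + S * (c r / S) := by
      rw [Finset.sum_congr rfl fun i _ => hterm i, Finset.sum_add_distrib,
        Finset.sum_add_distrib, ← Finset.sum_mul]
    have hdec' := hdec r t
    have hcr : c r = f r t0 - ∑ i : I, (f r t0 - M i r) := rfl
    rw [h1]
    rcases eq_or_ne S 0 with hS | hS
    · have hz : ∀ x ∈ Finset.univ, c x = 0 := by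
        refine (Finset.sum_eq_zero_iff_of_nonneg fun x _ => hc0 x).mp ?_
        rw [hcS, hS]
      have hcr0 : c r = 0 := hz r (Finset.mem_univ r)
      rw [hcr0] at hcr ⊢
      simp only [div_zero, zero_div, mul_zero]
      linarith
    · have : S * (c r / S) = c r := by
        rw [mul_comm, div_mul_cancel₀ _ hS]
      rw [this]
      linarith

/-- Proposition 1: A route-flow vector `f` satisfies the balance, demand,
nonnegativity and information-impact constraints if and only if it is induced by a feasible
strategy profile `q = (q^i)_{i∈I}` with `q^i(t^i) ≥ 0`, `∑_r q_r^i(t^i) = λ^i D`, and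
`f_r(t) = ∑_i q_r^i(t^i)`. -/
theorem feasible_route_flow_polytope
    {I : Type*} [Fintype I] [DecidableEq I]
    {T : I → Type*} [∀ i, Fintype (T i)] [∀ i, Nonempty (T i)]
    {R : Type*} [Fintype R] [Nonempty R]
    (D : ℝ) (hD : 0 < D)
    (lam : I → ℝ) (hlam0 : ∀ i, 0 ≤ lam i) (hlam1 : ∑ i : I, lam i = 1)
    (f : R → (∀ i, T i) → ℝ) :
    ((∀ (r : R) (i : I) (a b : T i) (t t' : ∀ j, T j),
        f r (Function.update t i a) - f r (Function.update t i b) =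
          f r (Function.update t' i a) - f r (Function.update t' i b)) ∧
     (∀ t : ∀ i, T i, ∑ r : R, f r t = D) ∧
     (∀ (r : R) (t : ∀ i, T i), 0 ≤ f r t) ∧
     (∀ (i : I) (t : ∀ j, T j),
        D - ∑ r : R, Finset.univ.inf' Finset.univ_nonempty
            (fun a : T i => f r (Function.update t i a)) ≤ lam i * D))
    ↔
    (∃ q : ∀ i : I, T i → R → ℝ,
      (∀ (i : I) (ti : T i) (r : R), 0 ≤ q i ti r) ∧
      (∀ (i : I) (ti : T i), ∑ r : R, q i ti r = lam i * D) ∧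
      (∀ (r : R) (t : ∀ i, T i), f r t = ∑ i : I, q i (t i) r)) := by
  classical
  constructor
  · rintro ⟨hsep, hdem, hnn, hiic⟩
    obtain ⟨t0⟩ : Nonempty (∀ i, T i) := ⟨fun i => Classical.arbitrary (T i)⟩
    refine forward_construction D lam f t0
      (fun i r => Finset.univ.inf' Finset.univ_nonempty
        (fun a : T i => f r (Function.update t0 i a)))
      (fun i r a => Finset.inf'_le _ (Finset.mem_univ a))
      (fun r t => sep_decomp f hsep t0 t r) hdem ?_ ?_ hlam1
    · intro r
      have hmin : ∀ i : I, ∃ a : T i,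
          Finset.univ.inf' Finset.univ_nonempty
            (fun a : T i => f r (Function.update t0 i a))
            = f r (Function.update t0 i a) := by
        intro i
        obtain ⟨a, -, ha⟩ := Finset.exists_mem_eq_inf' Finset.univ_nonempty
          (fun a : T i => f r (Function.update t0 i a))
        exact ⟨a, ha⟩
      choose tm htm using hmin
      have hdec := sep_decomp f hsep t0 tm r
      have h0 := hnn r tm
      have hrw : ∑ i : I, (f r t0 - Finset.univ.inf' Finset.univ_nonempty
            (fun a : T i => f r (Function.update t0 i a)))
          = ∑ i : I, (f r t0 - f r (Function.update t0 i (tm i))) :=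
        Finset.sum_congr rfl fun i _ => by rw [htm i]
      have hneg : ∑ i : I, (f r t0 - f r (Function.update t0 i (tm i)))
          + ∑ i : I, (f r (Function.update t0 i (tm i)) - f r t0) = 0 := by
        rw [← Finset.sum_add_distrib]; simp
      show ∑ i : I, (f r t0 - Finset.univ.inf' Finset.univ_nonempty
          (fun a : T i => f r (Function.update t0 i a))) ≤ f r t0
      rw [hrw]
      linarith
    · intro i
      exact hiic i t0
  · rintro ⟨q, hq0, hqsum, hqf⟩
    have key : ∀ (r : R) (i : I) (t : ∀ j, T j) (a : T i),
        f r (Function.update t i a)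
          = q i a r + ∑ j ∈ Finset.univ.erase i, q j (t j) r := by
      intro r i t a
      rw [hqf]
      rw [← Finset.add_sum_erase Finset.univ
        (fun j => q j (Function.update t i a j) r) (Finset.mem_univ i)]
      congr 1
      · simp
      · exact Finset.sum_congr rfl fun j hj => by
          rw [Function.update_of_ne (Finset.ne_of_mem_erase hj)]
    refine ⟨?_, ?_, ?_, ?_⟩
    · intro r i a b t t'
      rw [key r i t a, key r i t b, key r i t' a, key r i t' b]; ring
    · intro t
      calc ∑ r : R, f r t = ∑ r : R, ∑ i : I, q i (t i) r := by
              exact Finset.sum_congr rfl fun r _ => hqf r t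
        _ = ∑ i : I, ∑ r : R, q i (t i) r := Finset.sum_comm
        _ = ∑ i : I, lam i * D := Finset.sum_congr rfl fun i _ => hqsum i (t i)
        _ = D := by rw [← Finset.sum_mul, hlam1, one_mul]
    · intro r t
      rw [hqf]
      exact Finset.sum_nonneg fun i _ => hq0 i (t i) r
    · intro i t
      have hbound : ∀ r : R, ∑ j ∈ Finset.univ.erase i, q j (t j) r ≤
          Finset.univ.inf' Finset.univ_nonempty
            (fun a : T i => f r (Function.update t i a)) := by
        intro r
        refine Finset.le_inf' _ _ fun a _ => ?_
        rw [key r i t a]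
        have := hq0 i a r
        linarith
      have hle : ∑ r : R, ∑ j ∈ Finset.univ.erase i, q j (t j) r
          ≤ ∑ r : R, Finset.univ.inf' Finset.univ_nonempty
            (fun a : T i => f r (Function.update t i a)) :=
        Finset.sum_le_sum fun r _ => hbound r
      have hsum : ∑ r : R, ∑ j ∈ Finset.univ.erase i, q j (t j) r
          = ∑ j ∈ Finset.univ.erase i, lam j * D := by
        rw [Finset.sum_comm]
        exact Finset.sum_congr rfl fun j _ => hqsum j (t j)
      have hadd : lam i * D + ∑ j ∈ Finset.univ.erase i, lam j * D = D := by
        rw [Finset.add_sum_erase Finset.univ (fun j => lam j * D) (Finset.mem_univ i),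
          ← Finset.sum_mul, hlam1, one_mul]
      linarith
end

section
/- In the two-route two-state game of the motivating example with λ¹ ∈ [λ̲¹, 1], define the equilibrium family q₁^{1*}(a) = χ, q₁^{1*}(n) = λ̲¹ + χ, q₁^{2*} = α₂/(α₁^a + α₂) − χ, for χ ∈ [ max{0, λ¹ − α₁^a/(α₁^a+α₂)}, min{ α₂/(α₁^a+α₂), λ¹ − λ̲¹ } ]. Then for every such χ: (i) all strategy components are nonnegative and feasible (q₁^{1*}(t) ≤ λ¹, q₁^{2*} ≤ 1 − λ¹); (ii) the induced flow on route r₁ is ℓ₁* = α₂/(α₁^a+α₂) when the state is a and ℓ₁* = α₂/(α₁^n+α₂) when the state is n, independent of χ and of λ¹; (iii) in each state s the route costs are equalized: α₁^s ℓ₁* + b = α₂ (1 − ℓ₁*) + b. -/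
/-- Second-regime equilibrium family of the motivating example. For
`λ¹ ∈ [λ̲¹, 1]` and any `χ` in the admissible interval, the strategy profile
`q₁^{1*}(a)=χ`, `q₁^{1*}(n)=λ̲¹+χ`, `q₁^{2*}=α₂/(α₁ᵃ+α₂)−χ` is feasible, induces the
χ- and λ¹-independent route-1 flows `α₂/(α₁ᵃ+α₂)` (state a) and `α₂/(α₁ⁿ+α₂)` (state n),
and equalizes the two route costs in each state. -/
theorem second_regime_equilibrium
    (α1a α1n α2 b lam1 χ : ℝ)
    (hb : 0 < b)
    (h0 : 0 < α1n) (h1 : α1n < α2) (h2 : α2 < α1a)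
    (lamL : ℝ) (hlamL : lamL = α2 * (1 / (α1n + α2) - 1 / (α1a + α2)))
    (hlam1 : lamL ≤ lam1) (hlam1' : lam1 ≤ 1)
    (hχlo : max 0 (lam1 - α1a / (α1a + α2)) ≤ χ)
    (hχhi : χ ≤ min (α2 / (α1a + α2)) (lam1 - lamL)) :
    -- (i) feasibility
    (0 ≤ χ ∧ χ ≤ lam1 ∧ 0 ≤ lamL + χ ∧ lamL + χ ≤ lam1 ∧
      0 ≤ α2 / (α1a + α2) - χ ∧ α2 / (α1a + α2) - χ ≤ 1 - lam1) ∧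
    -- (ii) induced flows on route 1 are independent of χ and lam1
    (χ + (α2 / (α1a + α2) - χ) = α2 / (α1a + α2) ∧
      (lamL + χ) + (α2 / (α1a + α2) - χ) = α2 / (α1n + α2)) ∧
    -- (iii) route costs are equalized in each state
    (α1a * (α2 / (α1a + α2)) + b = α2 * (1 - α2 / (α1a + α2)) + b ∧
      α1n * (α2 / (α1n + α2)) + b = α2 * (1 - α2 / (α1n + α2)) + b) := by
  have hna : (0:ℝ) < α1n + α2 := by linarith
  have haa : (0:ℝ) < α1a + α2 := by linarith
  have hlamL0 : 0 ≤ lamL := by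
    rw [hlamL]
    have : 1 / (α1a + α2) ≤ 1 / (α1n + α2) := by
      apply one_div_le_one_div_of_le hna; linarith
    nlinarith
  have hχ0 : 0 ≤ χ := le_trans (le_max_left _ _) hχlo
  have hχa : lam1 - α1a / (α1a + α2) ≤ χ := le_trans (le_max_right _ _) hχlo
  have hχ1 : χ ≤ α2 / (α1a + α2) := le_trans hχhi (min_le_left _ _)
  have hχ2 : χ ≤ lam1 - lamL := le_trans hχhi (min_le_right _ _)
  have hsum : α2 / (α1a + α2) + α1a / (α1a + α2) = 1 := by field_simp; ring
  refine ⟨⟨hχ0, by linarith, by linarith, by linarith, by linarith, by linarith⟩,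
    ⟨by ring, ?_⟩, ?_, ?_⟩
  · rw [hlamL]; field_simp; ring
  · field_simp; ring
  · field_simp; ring
end

section
/- In the two-route two-state game of the motivating example with λ¹ ∈ [0, λ̲¹), the strategy profile q₁^{1*}(a) = 0, q₁^{1*}(n) = λ¹, q₁^{2*} = α₂/(ᾱ₁ + α₂) − λ¹ (1−p)(α₁^n + α₂)/(ᾱ₁ + α₂), where ᾱ₁ = p α₁^a + (1−p) α₁^n, satisfies the Bayesian Wardrop equilibrium conditions: (i) for the informed population in state a, c₁^a(q₁^{2*}) ≥ c₂(1 − q₁^{2*}); (ii) for the informed population in state n, c₁^n(λ¹ + q₁^{2*}) ≤ c₂(1 − λ¹ − q₁^{2*}); (iii) for the uninformed population, the expected costs of the two routes under the prior are equal: p·c₁^a(q₁^{2*}) + (1−p)·c₁^n(λ¹ + q₁^{2*}) = p·c₂(1 − q₁^{2*}) + (1−p)·c₂(1 − λ¹ − q₁^{2*}); and moreover 0 < q₁^{2*} ≤ 1 − λ¹. -/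
/-- First-regime equilibrium verification in the motivating example. For
`λ¹ ∈ [0, λ̲¹)`, the profile `q₁^{1*}(a)=0`, `q₁^{1*}(n)=λ¹`,
`q₁^{2*} = α₂/(ᾱ₁+α₂) − λ¹(1−p)(α₁ⁿ+α₂)/(ᾱ₁+α₂)` satisfies the Bayesian Wardrop
conditions (i)-(iii) and `0 < q₁^{2*} ≤ 1 − λ¹`. -/
theorem first_regime_equilibrium
    (p α1a α1n α2 b lam1 : ℝ)
    (hp : 0 < p) (hp1 : p < 1) (hb : 0 < b)
    (h0 : 0 < α1n) (h1 : α1n < α2) (h2 : α2 < α1a)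
    (lamL : ℝ) (hlamL : lamL = α2 * (1 / (α1n + α2) - 1 / (α1a + α2)))
    (hlam1 : 0 ≤ lam1) (hlam1' : lam1 < lamL)
    (abar q2 : ℝ)
    (habar : abar = p * α1a + (1 - p) * α1n)
    (hq2 : q2 = α2 / (abar + α2) - lam1 * ((1 - p) * (α1n + α2)) / (abar + α2)) :
    -- (i) informed population prefers r₂ in state a
    (α2 * (1 - q2) + b ≤ α1a * q2 + b) ∧
    -- (ii) informed population prefers r₁ in state n
    (α1n * (lam1 + q2) + b ≤ α2 * (1 - lam1 - q2) + b) ∧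
    -- (iii) uninformed population is indifferent in expectation
    (p * (α1a * q2 + b) + (1 - p) * (α1n * (lam1 + q2) + b) =
      p * (α2 * (1 - q2) + b) + (1 - p) * (α2 * (1 - lam1 - q2) + b)) ∧
    -- feasibility of q₁^{2*}
    (0 < q2 ∧ q2 ≤ 1 - lam1) := by
  subst habar
  have hn2 : 0 < α1n + α2 := by linarith
  have ha2 : 0 < α1a + α2 := by linarith
  have hS : 0 < p * α1a + (1 - p) * α1n + α2 := by
    nlinarith [mul_pos hp (sub_pos.mpr h2)]
  -- key: lam1*(α1n+α2)*(α1a+α2) < α2*(α1a-α1n)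
  have hkey : lam1 * ((α1n + α2) * (α1a + α2)) < α2 * (α1a - α1n) := by
    have hL : lamL * ((α1n + α2) * (α1a + α2)) = α2 * (α1a - α1n) := by
      rw [hlamL]; field_simp; ring
    have := mul_lt_mul_of_pos_right hlam1' (mul_pos hn2 ha2)
    linarith
  set S : ℝ := p * α1a + (1 - p) * α1n + α2 with hSdef
  have hq2S : q2 * S = α2 - lam1 * ((1 - p) * (α1n + α2)) := by
    rw [hq2]; field_simp
  -- (i): (α1a+α2)*q2 ≥ α2
  have hi : α2 ≤ (α1a + α2) * q2 := by
    have hmul : α2 * S ≤ ((α1a + α2) * q2) * S := by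
      have hC : (α1a + α2) * (q2 * S) =
          (α1a + α2) * (α2 - lam1 * ((1 - p) * (α1n + α2))) := by
        linear_combination (α1a + α2) * hq2S
      nlinarith [mul_lt_mul_of_pos_left hkey (sub_pos.mpr hp1)]
    exact le_of_mul_le_mul_right hmul hS
  -- (ii): (α1n+α2)*(lam1+q2) ≤ α2
  have hii : (α1n + α2) * (lam1 + q2) ≤ α2 := by
    have hmul : ((α1n + α2) * (lam1 + q2)) * S ≤ α2 * S := by
      have hC : (α1n + α2) * ((lam1 + q2) * S) =
          (α1n + α2) * (lam1 * (p * (α1a + α2)) + α2) := by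
        linear_combination (α1n + α2) * hq2S
      nlinarith [mul_lt_mul_of_pos_left hkey hp]
    exact le_of_mul_le_mul_right hmul hS
  -- positivity of q2
  have hNpos : 0 < α2 - lam1 * ((1 - p) * (α1n + α2)) := by
    have hln : lam1 * (α1n + α2) < α2 := by
      have h' : lam1 * (α1n + α2) * (α1a + α2) < α2 * (α1a + α2) := by
        nlinarith [mul_pos (show (0:ℝ) < α2 by linarith) hn2]
      exact lt_of_mul_lt_mul_right h' (le_of_lt ha2)
    nlinarith [mul_nonneg (mul_nonneg hlam1 (le_of_lt hp)) (le_of_lt hn2)]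
  have hq2pos : 0 < q2 := by
    have hv : q2 = (α2 - lam1 * ((1 - p) * (α1n + α2))) / S := by
      rw [hq2]; ring
    rw [hv]; exact div_pos hNpos hS
  -- q2 ≤ 1 - lam1
  have hsum : q2 ≤ 1 - lam1 := by
    have hD : lam1 * (α1a + α2) < α1a := by
      have h' : lam1 * (α1a + α2) * (α1n + α2) < α1a * (α1n + α2) := by
        nlinarith [mul_pos h0 ha2]
      exact lt_of_mul_lt_mul_right h' (le_of_lt hn2)
    have hmul : (lam1 + q2) * S ≤ 1 * S := by
      have hC : (lam1 + q2) * S = lam1 * (p * (α1a + α2)) + α2 := by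
        linear_combination hq2S
      nlinarith [mul_lt_mul_of_pos_left hD hp]
    have := le_of_mul_le_mul_right hmul hS
    linarith
  refine ⟨by nlinarith, by nlinarith, by linear_combination hq2S, hq2pos, hsum⟩
end

section
/- In the two-route two-state motivating example with λ¹ ∈ [0, λ̲¹) and equilibrium as above, the relative value of information is strictly positive: the uninformed population's expected equilibrium cost strictly exceeds the informed population's, i.e., C²*(λ) − C¹*(λ) > 0, where C¹*(λ) = p·c₂(1 − q₁^{2*}) + (1−p)·c₁^n(λ¹ + q₁^{2*}) and C²*(λ) = p·c₁^a(q₁^{2*}) + (1−p)·c₁^n(λ¹ + q₁^{2*}) (equivalently the common expected route cost of population 2). -/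
/-- In the first regime (`λ¹ < λ̲¹`) of the motivating example, the relative
value of information is strictly positive: the uninformed population's equilibrium cost
strictly exceeds the informed population's cost, `C²*(λ) − C¹*(λ) > 0`. -/
theorem relative_value_positive_first_regime
    (p α1a α1n α2 b lam1 : ℝ)
    (hp : 0 < p) (hp1 : p < 1) (hb : 0 < b)
    (h0 : 0 < α1n) (h1 : α1n < α2) (h2 : α2 < α1a)
    (lamL : ℝ) (hlamL : lamL = α2 * (1 / (α1n + α2) - 1 / (α1a + α2)))
    (hlam1 : 0 ≤ lam1) (hlam1' : lam1 < lamL)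
    (abar q2 C1 C2 : ℝ)
    (habar : abar = p * α1a + (1 - p) * α1n)
    (hq2 : q2 = α2 / (abar + α2) - lam1 * ((1 - p) * (α1n + α2)) / (abar + α2))
    (hC1 : C1 = p * (α2 * (1 - q2) + b) + (1 - p) * (α1n * (lam1 + q2) + b))
    (hC2 : C2 = p * (α1a * q2 + b) + (1 - p) * (α1n * (lam1 + q2) + b)) :
    0 < C2 - C1 := by
  have hna : 0 < α1n + α2 := by linarith
  have haa : 0 < α1a + α2 := by linarith
  have hD : 0 < abar + α2 := by nlinarith
  have hlam1'' : lam1 * ((α1n + α2) * (α1a + α2)) < α2 * (α1a - α1n) := by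
    rw [hlamL] at hlam1'
    have h := (mul_lt_mul_iff_of_pos_right (by positivity : (0:ℝ) < (α1n + α2) * (α1a + α2))).mpr hlam1'
    calc lam1 * ((α1n + α2) * (α1a + α2)) < α2 * (1 / (α1n + α2) - 1 / (α1a + α2)) * ((α1n + α2) * (α1a + α2)) := h
      _ = α2 * (α1a - α1n) := by field_simp; ring
  have hq2' : q2 * (abar + α2) = α2 - lam1 * ((1 - p) * (α1n + α2)) := by
    rw [hq2]; field_simp
  have key : α2 / (α1a + α2) < q2 := by
    rw [div_lt_iff₀ haa] at *
    nlinarith [hq2', hlam1'', mul_pos hD haa, sq_nonneg (1 - p)]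
  have : C2 - C1 = p * ((α1a + α2) * q2 - α2) := by rw [hC1, hC2]; ring
  rw [this]
  have h3 : α2 < (α1a + α2) * q2 := by
    rw [div_lt_iff₀ haa] at key; linarith [key]
  exact mul_pos hp (by linarith)
end

section
/- Suppose J^j(f*) = 0 for every equilibrium route flow f* at every size vector λ (population j is uninformed), and suppose the relative value of information satisfies the regime trichotomy: V^{ij*}(λ) < 0 only in the regime Λ₃^{ij} where the information-impact constraint of population j is tight at equilibrium with λ^j > 0, i.e., Ĵ^j(f*) = λ^j D. Then the regime Λ₃^{ij} is empty and C^{j*}(λ) ≥ C^{i*}(λ) for every size vector λ with λ^i, λ^j > 0 and every other population i. -/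
/-- Proposition 4: If population `j` is uninformed — every equilibrium route
flow `f*` at every size vector has `Ĵ^j(f*) = 0` — and the relative value of information
`V^{ij*}(λ) = C^j(λ) − C^i(λ)` can be negative only in the regime `Λ₃^{ij}` where `λ^j > 0`
and population `j`'s information-impact constraint is tight at equilibrium
(`Ĵ^j(f*) = λ^j D`), then the regime `Λ₃^{ij}` is empty and `C^{j*}(λ) ≥ C^{i*}(λ)` for
every size vector with `λ^i, λ^j > 0`. -/
theorem uninformed_no_advantage
    {I Flow : Type*} [Fintype I]
    (D : ℝ) (hD : 0 < D)
    (i j : I) (hij : i ≠ j)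
    (simplex : Set (I → ℝ))
    (hsimplex : simplex = {lam | (∀ k, 0 ≤ lam k) ∧ ∑ k : I, lam k = 1})
    (Feq : (I → ℝ) → Set Flow)
    (hFeqNe : ∀ lam ∈ simplex, (Feq lam).Nonempty)
    (Jhat : I → Flow → ℝ)
    (huninformed : ∀ lam ∈ simplex, ∀ f ∈ Feq lam, Jhat j f = 0)
    (C : I → (I → ℝ) → ℝ)
    (V : (I → ℝ) → ℝ) (hV : ∀ lam, V lam = C j lam - C i lam)
    (Λ₃ : Set (I → ℝ))
    (hΛ₃ : Λ₃ = {lam ∈ simplex |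
      0 < lam j ∧ ∀ f ∈ Feq lam, Jhat j f = lam j * D})
    (htrichotomy : ∀ lam ∈ simplex, V lam < 0 → lam ∈ Λ₃) :
    Λ₃ = ∅ ∧
    ∀ lam ∈ simplex, 0 < lam i → 0 < lam j → C i lam ≤ C j lam := by
  have hempty : Λ₃ = ∅ := by
    ext lam
    simp only [Set.mem_empty_iff_false, iff_false]
    intro hmem
    rw [hΛ₃] at hmem
    obtain ⟨hs, hpos, htight⟩ := hmem
    obtain ⟨f, hf⟩ := hFeqNe lam hs
    have h0 := huninformed lam hs f hf
    have ht := htight f hf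
    have : lam j * D > 0 := mul_pos hpos hD
    linarith [h0 ▸ ht]
  refine ⟨hempty, fun lam hs hi hj => ?_⟩
  by_contra h
  push_neg at h
  have : V lam < 0 := by rw [hV]; linarith
  have := htrichotomy lam hs this
  rw [hempty] at this
  exact this
end

section
/- In a Bayesian routing game on a network of parallel routes (every route consists of a single distinct edge, so route flows equal edge loads) with two populations, if the information-impact constraint of population 1 is tight at the unique equilibrium route flow f* (regime Λ₁^{12}), then the equilibrium strategy profile is unique and given by q_r^{1*}(t¹) = f*_r(t¹, t̂²) − min_{t̃¹} f*_r(t̃¹, t̂²) and q_r^{2*}(t²) = min_{t̃¹} f*_r(t̃¹, t²), for any fixed t̂² ∈ T². -/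
lemma inf'_add_const {α : Type*} [Fintype α] (h : (Finset.univ : Finset α).Nonempty)
    (g : α → ℝ) (c : ℝ) :
    Finset.univ.inf' h (fun x => g x + c) = Finset.univ.inf' h g + c := by
  apply le_antisymm
  · obtain ⟨x, _, hx⟩ := Finset.exists_mem_eq_inf' h g
    rw [hx]
    exact Finset.inf'_le _ (Finset.mem_univ x)
  · apply Finset.le_inf'
    intro x _
    have := Finset.inf'_le g (Finset.mem_univ x)
    linarith

/-- Corollary B.1, regime Λ₁ case: In a two-population parallel-route game
(route flows = edge loads, so the equilibrium route flow `f*` is unique), if the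
information-impact constraint of population 1 is tight at `f*`
(`λ¹ D = Ĵ¹(f*) = D − ∑_r min_{t¹} f*_r(t¹, t̂²)`), then the equilibrium strategy profile
is unique: every feasible decomposition `f*_r(t¹,t²) = q¹_r(t¹) + q²_r(t²)` satisfies
`q¹_r(t¹) = f*_r(t¹,t̂²) − min_{t̃¹} f*_r(t̃¹,t̂²)` and `q²_r(t²) = min_{t̃¹} f*_r(t̃¹,t²)`. -/
theorem unique_strategy_regime_one
    {T1 T2 R : Type*} [Fintype T1] [Nonempty T1] [Fintype T2] [Nonempty T2] [Fintype R]
    (D lam1 lam2 : ℝ) (hD : 0 < D) (hlam1 : 0 ≤ lam1) (hlam2 : 0 ≤ lam2)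
    (hlam : lam1 + lam2 = 1)
    (f : R → T1 → T2 → ℝ)
    (hsep : ∀ (r : R) (t1 s1 : T1) (t2 s2 : T2),
      f r t1 t2 - f r s1 t2 = f r t1 s2 - f r s1 s2)
    (hdem : ∀ (t1 : T1) (t2 : T2), ∑ r : R, f r t1 t2 = D)
    (hpos : ∀ (r : R) (t1 : T1) (t2 : T2), 0 ≤ f r t1 t2)
    (tref2 : T2)
    (htight : lam1 * D =
      D - ∑ r : R, Finset.univ.inf' Finset.univ_nonempty (fun t1 : T1 => f r t1 tref2))
    (q1 : T1 → R → ℝ) (q2 : T2 → R → ℝ)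
    (hq1pos : ∀ t1 r, 0 ≤ q1 t1 r) (hq2pos : ∀ t2 r, 0 ≤ q2 t2 r)
    (hq1sum : ∀ t1, ∑ r : R, q1 t1 r = lam1 * D)
    (hq2sum : ∀ t2, ∑ r : R, q2 t2 r = lam2 * D)
    (hdecomp : ∀ r t1 t2, f r t1 t2 = q1 t1 r + q2 t2 r) :
    (∀ (r : R) (t1 : T1),
      q1 t1 r = f r t1 tref2 -
        Finset.univ.inf' Finset.univ_nonempty (fun s1 : T1 => f r s1 tref2)) ∧
    (∀ (r : R) (t2 : T2),
      q2 t2 r = Finset.univ.inf' Finset.univ_nonempty (fun s1 : T1 => f r s1 t2)) := by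
  set m : R → T2 → ℝ :=
    fun r t2 => Finset.univ.inf' Finset.univ_nonempty (fun s1 : T1 => f r s1 t2) with hm
  -- pointwise bound: q2 t2 r ≤ m r t2
  have hle : ∀ (r : R) (t2 : T2), q2 t2 r ≤ m r t2 := by
    intro r t2
    apply Finset.le_inf'
    intro s1 _
    have := hdecomp r s1 t2
    have := hq1pos s1 r
    linarith
  -- at tref2, the sums coincide, forcing equality
  have hsum : ∑ r : R, q2 tref2 r = ∑ r : R, m r tref2 := by
    rw [hq2sum tref2]
    have : lam2 * D = D - lam1 * D := by nlinarith
    rw [this, htight]; ring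
  have hq2ref : ∀ r : R, q2 tref2 r = m r tref2 := by
    have := (Finset.sum_eq_sum_iff_of_le (fun r _ => hle r tref2)).mp hsum
    intro r; exact (this r (Finset.mem_univ r))
  have hQ1 : ∀ (r : R) (t1 : T1), q1 t1 r = f r t1 tref2 - m r tref2 := by
    intro r t1
    have := hdecomp r t1 tref2
    rw [← hq2ref r]; linarith
  refine ⟨hQ1, ?_⟩
  intro r t2
  obtain ⟨t1⟩ := (inferInstance : Nonempty T1)
  have hc : m r t2 = m r tref2 + (f r t1 t2 - f r t1 tref2) := by
    have heq : (fun s1 : T1 => f r s1 t2)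
        = fun s1 : T1 => f r s1 tref2 + (f r t1 t2 - f r t1 tref2) := by
      funext s1
      have := hsep r s1 t1 t2 tref2
      linarith
    rw [hm]
    simp only [heq]
    exact inf'_add_const _ _ _
  have hd := hdecomp r t1 t2
  have hq := hQ1 r t1
  linarith
end
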